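/- Let $a,b>0$ and define $\varphi(r)=\dfrac{a^2\left(2\sqrt{4a+b^2 r^4}-b r^2\right)r^2}{3\left(\sqrt{4a+b^2 r^4}-b r^2\right)^2}$ for $r>0$. Then $\varphi$ is strictly increasing on $(0,\infty)$, $\varphi(r)>0$ for all $r>0$, and $\varphi(r)\to+\infty$ as $r\to+\infty$. -/

import Mathlib

open Filter

theorem stmt_13 (a b : ℝ) (ha : 0 < a) (hb : 0 < b)
    (φ : ℝ → ℝ)
    (hφ : ∀ r, φ r = a ^ 2 * (2 * Real.sqrt (4 * a + b ^ 2 * r ^ 4) - b * r ^ 2) * r ^ 2 /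
      (3 * (Real.sqrt (4 * a + b ^ 2 * r ^ 4) - b * r ^ 2) ^ 2)) :
    StrictMonoOn φ (Set.Ioi 0) ∧ (∀ r, 0 < r → 0 < φ r) ∧
      Filter.Tendsto φ Filter.atTop Filter.atTop := by
  set u : ℝ → ℝ := fun r => Real.sqrt (4 * a + b ^ 2 * r ^ 4) + b * r ^ 2 with hu
  have hs : ∀ r : ℝ, (Real.sqrt (4 * a + b ^ 2 * r ^ 4)) ^ 2 = 4 * a + b ^ 2 * r ^ 4 := by
    intro r; exact Real.sq_sqrt (by positivity)
  have hsnn : ∀ r : ℝ, 0 ≤ Real.sqrt (4 * a + b ^ 2 * r ^ 4) := fun r => Real.sqrt_nonneg _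
  have hsgt : ∀ r : ℝ, b * r ^ 2 < Real.sqrt (4 * a + b ^ 2 * r ^ 4) := by
    intro r
    nlinarith [hs r, hsnn r, sq_nonneg (b * r ^ 2), sq_nonneg r]
  have hc : (0:ℝ) < 192 * b := by positivity
  have key : ∀ r : ℝ, φ r = ((u r) ^ 2 - 4 * a) * ((u r) ^ 2 + 12 * a) / (192 * b) := by
    intro r
    rw [hφ]
    set s := Real.sqrt (4 * a + b ^ 2 * r ^ 4) with hsdef
    have h2 : s ^ 2 = 4 * a + b ^ 2 * r ^ 4 := hs r
    have h3 : b * r ^ 2 < s := hsgt r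
    have hne : s - b * r ^ 2 ≠ 0 := ne_of_gt (by linarith)
    have hane : a = (s ^ 2 - b ^ 2 * r ^ 4) / 4 := by linarith
    simp only [hu]
    rw [← hsdef]
    rw [hane]
    field_simp
    ring
  have hugt : ∀ r : ℝ, 0 < r → 4 * a < (u r) ^ 2 := by
    intro r hr
    simp only [hu]
    nlinarith [hs r, mul_nonneg (hsnn r) (mul_pos hb (pow_pos hr 2)).le, pow_pos hr 4,
      mul_pos (mul_pos hb hb) (pow_pos hr 4)]
  have humono : ∀ x y : ℝ, 0 < x → x < y → u x < u y := by
    intro x y hx hxy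
    have h1 : Real.sqrt (4 * a + b ^ 2 * x ^ 4) < Real.sqrt (4 * a + b ^ 2 * y ^ 4) := by
      apply Real.sqrt_lt_sqrt (by positivity)
      gcongr
    have h2 : b * x ^ 2 < b * y ^ 2 := by gcongr
    simp only [hu]; linarith
  have hupos : ∀ r : ℝ, 0 < r → 0 < u r := by
    intro r hr; simp only [hu]
    have : 0 < b * r ^ 2 := by positivity
    linarith [hsnn r]
  refine ⟨?_, ?_, ?_⟩
  · intro x hx y hy hxy
    simp only [Set.mem_Ioi] at hx hy
    rw [key x, key y, div_lt_div_iff₀ hc hc]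
    have h1 := hugt x hx
    have h2 := hugt y hy
    have h3 := humono x y hx hxy
    have h4 := hupos x hx
    have h5 : (u x) ^ 2 < (u y) ^ 2 := by nlinarith
    nlinarith [mul_pos (sub_pos.mpr h5) (by nlinarith : (0:ℝ) < (u x) ^ 2 + (u y) ^ 2 + 8 * a)]
  · intro r hr
    rw [key r]
    have h1 := hugt r hr
    exact div_pos (mul_pos (by linarith) (by nlinarith)) hc
  · have hlow : ∀ r : ℝ, 1 ≤ r → a * b * r ^ 4 / 8 ≤ φ r := by
      intro r hr
      have hr0 : 0 < r := by linarith
      rw [key r, div_le_div_iff₀ (by norm_num) hc]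
      have h2 : (Real.sqrt (4 * a + b ^ 2 * r ^ 4)) ^ 2 = 4 * a + b ^ 2 * r ^ 4 := hs r
      have h3 := hsgt r
      simp only [hu]
      nlinarith [sq_nonneg r, mul_pos hb (mul_pos hr0 hr0), hsnn r,
        mul_nonneg (mul_nonneg ha.le hb.le) (sq_nonneg (r ^ 2)),
        mul_le_mul_of_nonneg_left h3.le (by positivity : (0:ℝ) ≤ b * r ^ 2)]
    have h1 : Tendsto (fun r : ℝ => a * b * r ^ 4 / 8) atTop atTop := by
      apply Tendsto.atTop_div_const (by norm_num : (0:ℝ) < 8)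
      exact (tendsto_pow_atTop (by norm_num)).const_mul_atTop (by positivity)
    exact tendsto_atTop_mono' atTop (eventually_atTop.mpr ⟨1, hlow⟩) h1
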